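/- Let p ≡ −1 (mod 16) be a prime. Then there exists s in the field ℚ_p of p-adic numbers with s² = 2, and for any such s, both 2 + s and 2 − s are squares in ℚ_p; i.e., the elements 2 + √2 and 2 − √2 are squares in ℚ_p. -/

import Mathlib

open Polynomial in
/-- Any element of a field satisfying `x ^ p = x` lies in the prime field. -/
lemma mem_range_of_pow_card_eq (p : ℕ) [Fact p.Prime] (K : Type*) [Field K]
    [Algebra (ZMod p) K] (x : K) (hx : x ^ p = x) :
    ∃ c : ZMod p, algebraMap (ZMod p) K c = x := by
  classical
  set f : K[X] := X ^ p - X with hf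
  have hp1 : 1 < p := (Fact.out : p.Prime).one_lt
  have hfne : f ≠ 0 := FiniteField.X_pow_card_sub_X_ne_zero K hp1
  have hdeg : f.natDegree = p := FiniteField.X_pow_card_sub_X_natDegree_eq K hp1
  have hroot : ∀ y : K, y ^ p = y → y ∈ f.roots := by
    intro y hy
    rw [Polynomial.mem_roots hfne]
    simp [hf, IsRoot, hy]
  have hι : Function.Injective (algebraMap (ZMod p) K) :=
    (algebraMap (ZMod p) K).injective
  set S : Finset K := Finset.univ.image (algebraMap (ZMod p) K) with hS
  have hScard : S.card = p := by
    rw [hS, Finset.card_image_of_injective _ hι, Finset.card_univ, ZMod.card]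
  have hSsub : S ⊆ f.roots.toFinset := by
    intro y hy
    rw [hS, Finset.mem_image] at hy
    obtain ⟨c, -, rfl⟩ := hy
    rw [Multiset.mem_toFinset]
    exact hroot _ (by rw [← map_pow, ZMod.pow_card])
  have hcardle : f.roots.toFinset.card ≤ p := by
    calc f.roots.toFinset.card ≤ Multiset.card f.roots := f.roots.toFinset_card_le
    _ ≤ f.natDegree := f.card_roots' 
    _ = p := hdeg
  have hSeq : S = f.roots.toFinset := Finset.eq_of_subset_of_card_le hSsub (hScard ▸ hcardle)
  have hxS : x ∈ S := by
    rw [hSeq, Multiset.mem_toFinset]; exact hroot x hx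
  rw [hS, Finset.mem_image] at hxS
  obtain ⟨c, -, hc⟩ := hxS
  exact ⟨c, hc⟩


open Polynomial in
/-- Hensel lifting of square roots of units for odd `p`. -/
lemma lift_sq (p : ℕ) [hp : Fact p.Prime] (hodd : p ≠ 2) (c : ℤ_[p]) (b : ZMod p)
    (hb : b ≠ 0) (h : b ^ 2 = PadicInt.toZMod c) :
    ∃ z : ℤ_[p], z ^ 2 = c ∧ PadicInt.toZMod z = b := by
  have key : ∀ y : ℤ_[p], PadicInt.toZMod y = 0 ↔ ‖y‖ < 1 := by
    intro y
    rw [← RingHom.mem_ker, PadicInt.ker_toZMod, PadicInt.maximalIdeal_eq_span_p,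
      Ideal.mem_span_singleton, ← PadicInt.norm_lt_one_iff_dvd]
  set a : ℤ_[p] := ((b.val : ℕ) : ℤ_[p]) with ha
  have hta : PadicInt.toZMod a = b := by
    rw [ha, map_natCast, ZMod.natCast_val, ZMod.cast_id]
  set F : Polynomial ℤ_[p] := X ^ 2 - C c with hF
  have hFa : F.eval a = a ^ 2 - c := by simp [hF]
  have hFd : F.derivative.eval a = 2 * a := by simp [hF, derivative_X_pow]; norm_num
  have heval : ‖F.eval a‖ < 1 := by
    rw [← key, hFa, map_sub, map_pow, hta, ← h, sub_self]
  have h2b : (2 : ZMod p) * b ≠ 0 := by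
    apply mul_ne_zero _ hb
    have : ((2 : ℕ) : ZMod p) ≠ 0 := by
      rw [Ne, ZMod.natCast_eq_zero_iff]
      exact fun hd => hodd ((Nat.prime_dvd_prime_iff_eq (Fact.out) Nat.prime_two).mp hd)
    simpa using this
  have hder : ‖F.derivative.eval a‖ = 1 := by
    rw [hFd]
    by_contra hne
    have hlt : ‖(2 : ℤ_[p]) * a‖ < 1 := lt_of_le_of_ne (PadicInt.norm_le_one _) hne
    rw [← key, map_mul, hta, map_ofNat] at hlt
    exact h2b hlt
  have hnorm : ‖F.eval a‖ < ‖F.derivative.eval a‖ ^ 2 := by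
    rw [hder]; simpa using heval
  obtain ⟨z, hz0, hz1, -, -⟩ := hensels_lemma hnorm
  refine ⟨z, ?_, ?_⟩
  · have : z ^ 2 - c = 0 := by simpa [hF] using hz0
    exact sub_eq_zero.mp this
  · rw [Polynomial.coe_aeval_eq_eval, hder] at hz1
    have : PadicInt.toZMod (z - a) = 0 := (key _).mpr hz1
    rw [map_sub, hta, sub_eq_zero] at this
    exact this

/-- Residue computation: for `p ≡ 15 [MOD 16]` there are `a, x : ZMod p`
with `a ^ 2 = 2` and `x ^ 2 = 2 + a`. -/
lemma residue_lemma (p : ℕ) [hp : Fact p.Prime] (hmod : p % 16 = 15) :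
    ∃ a x : ZMod p, a ^ 2 = 2 ∧ x ^ 2 = 2 + a := by
  classical
  set K := GaloisField p 2 with hK
  have hcardK : Nat.card K = p ^ 2 := GaloisField.card p 2 (by norm_num)
  have hcardu : Nat.card Kˣ = p ^ 2 - 1 := by rw [Nat.card_units, hcardK]
  have hp2 : 2 ≤ p := hp.out.two_le
  have hdvd : 16 ∣ p ^ 2 - 1 := by
    have h1 : p ^ 2 % 16 = 1 := by rw [Nat.pow_mod, hmod]
    have h2 : 1 ≤ p ^ 2 := by nlinarith
    omega
  obtain ⟨g, hg⟩ := IsCyclic.exists_monoid_generator (α := Kˣ)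
  have hgord : orderOf g = p ^ 2 - 1 := by
    rw [orderOf_eq_card_of_forall_mem_zpowers
      (fun x => mem_powers_iff_mem_zpowers.mp (hg x)), hcardu]
  obtain ⟨k, hk⟩ := hdvd
  have hq4 : 4 ≤ p ^ 2 := by nlinarith
  have hkpos : 0 < k := by omega
  set z : Kˣ := g ^ k with hz
  have hzord : orderOf z = 16 := by
    rw [hz, orderOf_pow, hgord, hk]
    have hgcd : (16 * k).gcd k = k := Nat.gcd_eq_right ⟨16, by ring⟩
    rw [hgcd, Nat.mul_div_cancel _ hkpos]
  set u : K := ((z : Kˣ) : K) with hu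
  have hune : u ≠ 0 := z.ne_zero
  have hu16 : u ^ 16 = 1 := by
    have : z ^ 16 = 1 := by rw [← hzord]; exact pow_orderOf_eq_one z
    rw [hu, ← Units.val_pow_eq_pow_val, this, Units.val_one]
  have hu8 : u ^ 8 = -1 := by
    have hne : u ^ 8 ≠ 1 := by
      intro h
      have : z ^ 8 = 1 := Units.ext (by push_cast; exact h)
      have := orderOf_dvd_of_pow_eq_one this
      rw [hzord] at this
      omega
    have hsq : (u ^ 8 - 1) * (u ^ 8 + 1) = 0 := by
      have : (u ^ 8) ^ 2 = 1 := by rw [← pow_mul]; exact hu16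
      linear_combination this
    rcases mul_eq_zero.mp hsq with h | h
    · exact absurd (sub_eq_zero.mp h) hne
    · exact eq_neg_of_add_eq_zero_left h
  set s₀ : K := u ^ 2 + (u ^ 2)⁻¹ with hs₀
  set x : K := u + u⁻¹ with hx
  have hw : u ^ 2 * (u ^ 2)⁻¹ = 1 := mul_inv_cancel₀ (pow_ne_zero _ hune)
  have hs₀sq : s₀ ^ 2 = 2 := by
    rw [hs₀]
    linear_combination (2 - u ^ 4 * (u ^ 2 * (u ^ 2)⁻¹ + 1)) * hw + ((u ^ 2)⁻¹) ^ 2 * hu8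
  have hvu : u⁻¹ * u = 1 := inv_mul_cancel₀ hune
  have hxsq : x ^ 2 = 2 + s₀ := by
    rw [hx, hs₀, ← inv_pow]
    linear_combination (2 : K) * hvu
  -- Frobenius fixes x
  have hchar : CharP K p := inferInstance
  have hxp : x ^ p = x := by
    have h15 : u ^ 15 * u = 1 := by rw [← pow_succ]; exact hu16
    have hz15 : z ^ p = z ^ 15 := by rw [← pow_mod_orderOf, hzord, hmod]
    have hup : u ^ p = u⁻¹ := by
      have h1 : u ^ p = u ^ 15 := by
        rw [hu, ← Units.val_pow_eq_pow_val, hz15, Units.val_pow_eq_pow_val]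
      rw [h1]
      exact eq_inv_of_mul_eq_one_left h15
    have huip : (u⁻¹) ^ p = u := by
      rw [inv_pow, hup, inv_inv]
    rw [hx, add_pow_char, hup, huip, add_comm]
  obtain ⟨x', hx'⟩ := mem_range_of_pow_card_eq p K x hxp
  have hι : Function.Injective (algebraMap (ZMod p) K) := (algebraMap (ZMod p) K).injective
  set a : ZMod p := x' ^ 2 - 2 with ha
  have hsa : algebraMap (ZMod p) K a = s₀ := by
    rw [ha, map_sub, map_pow, hx']
    have : x ^ 2 - 2 = s₀ := by rw [hxsq]; ring
    rw [← this]
    rw [map_ofNat]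
  refine ⟨a, x', ?_, ?_⟩
  · apply hι
    rw [map_pow, hsa, hs₀sq, map_ofNat]
  · apply hι
    rw [map_pow, hx', hxsq, map_add, hsa, map_ofNat]


/-- For a prime `p ≡ -1 (mod 16)`, there is `s ∈ ℚ_p` with `s² = 2`,
and for any such `s` both `2 + s` and `2 - s` are squares in `ℚ_p`; i.e. the elements
`2 ± √2` are squares in `ℚ_p`. -/
theorem two_add_sqrt_two_is_square_in_Qp
    (p : ℕ) [hp : Fact p.Prime] (hmod : p % 16 = 15) :
    (∃ s : ℚ_[p], s ^ 2 = 2) ∧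
      ∀ s : ℚ_[p], s ^ 2 = 2 →
        (∃ t : ℚ_[p], t ^ 2 = 2 + s) ∧ (∃ t : ℚ_[p], t ^ 2 = 2 - s) := by
  have hodd : p ≠ 2 := by intro h; rw [h] at hmod; norm_num at hmod
  obtain ⟨a, x, ha, hx⟩ := residue_lemma p hmod
  have h2ne : (2 : ZMod p) ≠ 0 := by
    have h2 : ((2 : ℕ) : ZMod p) ≠ 0 := by
      rw [Ne, ZMod.natCast_eq_zero_iff]
      exact fun hd => hodd ((Nat.prime_dvd_prime_iff_eq Fact.out Nat.prime_two).mp hd)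
    simpa using h2
  have hane : a ≠ 0 := by
    intro h
    rw [h] at ha
    exact h2ne (by linear_combination -ha)
  obtain ⟨z, hz, hza⟩ := lift_sq p hodd 2 a hane (by rw [map_ofNat]; exact ha)
  have h2a : (2 : ZMod p) + a ≠ 0 := by
    intro h
    apply h2ne
    linear_combination ha + (2 - a) * h
  have hxne : x ≠ 0 := by
    intro h
    rw [h] at hx
    exact h2a (by linear_combination -hx)
  obtain ⟨t, ht, -⟩ := lift_sq p hodd (2 + z) x hxne
    (by rw [map_add, map_ofNat, hza]; exact hx)
  -- move to ℚ_[p]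
  set s₁ : ℚ_[p] := (z : ℚ_[p]) with hs₁def
  set t₁ : ℚ_[p] := (t : ℚ_[p]) with ht₁def
  have hs₁ : s₁ ^ 2 = 2 := by
    rw [hs₁def]
    exact_mod_cast congrArg (fun w : ℤ_[p] => (w : ℚ_[p])) hz
  have ht₁ : t₁ ^ 2 = 2 + s₁ := by
    rw [ht₁def, hs₁def]
    exact_mod_cast congrArg (fun w : ℤ_[p] => (w : ℚ_[p])) ht
  have h20 : (2 : ℚ_[p]) ≠ 0 := two_ne_zero
  have htne : t₁ ≠ 0 := by
    intro h
    rw [h] at ht₁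
    apply h20
    linear_combination hs₁ + (s₁ - 2) * ht₁
  have key : (2 - s₁) * t₁ ^ 2 = s₁ ^ 2 := by
    rw [ht₁]
    linear_combination (-2 : ℚ_[p]) * hs₁
  have hneg : (s₁ * t₁⁻¹) ^ 2 = 2 - s₁ := by
    have hti : t₁ * t₁⁻¹ = 1 := mul_inv_cancel₀ htne
    calc (s₁ * t₁⁻¹) ^ 2 = (2 - s₁) * (t₁ * t₁⁻¹) ^ 2 := by
          linear_combination (-(t₁⁻¹ ^ 2)) * key
    _ = 2 - s₁ := by rw [hti]; ring
  refine ⟨⟨s₁, hs₁⟩, fun s hs => ?_⟩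
  have hcase : s = s₁ ∨ s = -s₁ := by
    have h0 : (s - s₁) * (s + s₁) = 0 := by linear_combination hs - hs₁
    rcases mul_eq_zero.mp h0 with h | h
    · exact Or.inl (sub_eq_zero.mp h)
    · exact Or.inr (eq_neg_of_add_eq_zero_left h)
  rcases hcase with rfl | rfl
  · exact ⟨⟨t₁, ht₁⟩, ⟨s₁ * t₁⁻¹, hneg⟩⟩
  · constructor
    · exact ⟨s₁ * t₁⁻¹, by rw [hneg]; ring⟩
    · exact ⟨t₁, by rw [ht₁]; ring⟩
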